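/- For every real z with 0 < z ≤ 1, the series Σ_{k=0}^∞ (3/2)_k z^k/((k+1)·(k+1)!) converges and Σ_{k=0}^∞ (3/2)_k z^k/((k+1)·(k+1)!) = −(4/z)·ln((1 + √(1−z))/2). (This is the reduction formula ₃F₂(1,1,3/2; 2,2; z) = −(4/z)ln(1/2 + √(1−z)/2).) -/

import Mathlib

open Real Filter Topology

noncomputable def cb (n : ℕ) : ℝ := (Nat.centralBinom n : ℝ) / 4 ^ n

lemma cb_pos (n : ℕ) : 0 < cb n :=
  div_pos (by exact_mod_cast n.centralBinom_pos) (by positivity)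

lemma cb_zero : cb 0 = 1 := by simp [cb, Nat.centralBinom]

lemma cb_one : cb 1 = 1/2 := by
  simp [cb, Nat.centralBinom]
  norm_num [Nat.choose]

lemma cb_succ (n : ℕ) : (2 * (n:ℝ) + 2) * cb (n+1) = (2 * n + 1) * cb n := by
  have h := Nat.succ_mul_centralBinom_succ n
  have h' : ((n:ℝ) + 1) * (Nat.centralBinom (n+1) : ℝ) = 2 * (2*n+1) * Nat.centralBinom n := by
    exact_mod_cast congrArg (Nat.cast : ℕ → ℝ) h
  unfold cb
  push_cast
  rw [pow_succ]
  field_simp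
  linear_combination 2 * h'

lemma cb_le_one (n : ℕ) : cb n ≤ 1 := by
  induction n with
  | zero => simp [cb_zero]
  | succ k ih =>
    have h := cb_succ k
    have hk : (0:ℝ) < 2 * k + 2 := by positivity
    nlinarith [cb_pos (k+1), cb_pos k]

lemma cb_sq (n : ℕ) : (2 * (n:ℝ) + 1) * cb n ^ 2 ≤ 1 := by
  induction n with
  | zero => simp [cb_zero]
  | succ k ih =>
    have h := cb_succ k
    have hk : (0:ℝ) < 2 * k + 2 := by positivity
    have h2 : cb (k+1) = (2*k+1)/(2*k+2) * cb k := by field_simp; linarith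
    rw [h2]
    have hpos := cb_pos k
    push_cast
    rw [div_mul_eq_mul_div, div_pow, ← mul_div_assoc, div_le_one (by positivity), mul_pow]
    nlinarith [ih, sq_nonneg (cb k)]


lemma summable_cb_pow {x : ℝ} (hx : |x| < 1) : Summable fun n => cb n * x ^ n := by
  refine Summable.of_norm_bounded (g := fun n => |x| ^ n) (summable_geometric_of_lt_one (abs_nonneg x) hx) fun n => ?_
  rw [Real.norm_eq_abs, abs_mul, abs_pow, abs_of_pos (cb_pos n)]
  exact mul_le_of_le_one_left (by positivity) (cb_le_one n)

lemma summable_n_cb_pow {x : ℝ} (hx : |x| < 1) : Summable fun n : ℕ => (n:ℝ) * cb n * x ^ n := by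
  refine Summable.of_norm_bounded (g := fun n => (n:ℝ) * |x| ^ n) ?_ fun n => ?_
  · simpa using summable_pow_mul_geometric_of_norm_lt_one 1 (by rwa [Real.norm_eq_abs, abs_abs])
  · rw [Real.norm_eq_abs, abs_mul, abs_mul, abs_pow, abs_of_pos (cb_pos n), Nat.abs_cast]
    have : (n:ℝ) * cb n ≤ n := by nlinarith [cb_pos n, cb_le_one n, (n.cast_nonneg : (0:ℝ) ≤ n)]
    exact mul_le_mul_of_nonneg_right this (by positivity)

lemma summable_n_cb_pow' {x : ℝ} (hx : |x| < 1) : Summable fun n : ℕ => (n:ℝ) * cb n * x ^ (n-1) := by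
  rw [← summable_nat_add_iff 1]
  have hs : Summable fun n : ℕ => ((n:ℝ) * cb (n+1) * x^n) + cb (n+1) * x^n := by
    refine Summable.add ?_ (Summable.of_norm_bounded (g := fun n : ℕ => |x| ^ n)
      (summable_geometric_of_lt_one (abs_nonneg x) hx) fun n => by
        rw [Real.norm_eq_abs, abs_mul, abs_pow, abs_of_pos (cb_pos (n+1))]
        exact mul_le_of_le_one_left (by positivity) (cb_le_one (n+1)))
    refine Summable.of_norm_bounded (g := fun n : ℕ => (n:ℝ) * |x| ^ n) ?_ fun n => ?_
    · simpa using summable_pow_mul_geometric_of_norm_lt_one 1 (by rwa [Real.norm_eq_abs, abs_abs] : ‖|x|‖ < 1)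
    · rw [Real.norm_eq_abs, abs_mul, abs_mul, abs_pow, abs_of_pos (cb_pos (n+1)), Nat.abs_cast]
      have : (n:ℝ) * cb (n+1) ≤ n := by nlinarith [cb_pos (n+1), cb_le_one (n+1), (n.cast_nonneg : (0:ℝ) ≤ n)]
      exact mul_le_mul_of_nonneg_right this (by positivity)
  refine hs.congr fun n => ?_
  push_cast
  ring

noncomputable def B (n : ℕ) : ℝ := 1 / (n:ℝ) ^ ((3:ℝ)/2)

lemma summable_B : Summable B := Real.summable_one_div_nat_rpow.mpr (by norm_num)

lemma cb_div_le_B (n : ℕ) : cb n / n ≤ B n := by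
  rcases Nat.eq_zero_or_pos n with rfl | hn
  · simp [B]
  have hn' : (0:ℝ) < n := by exact_mod_cast hn
  have h1 : cb n ≤ 1 / Real.sqrt n := by
    rw [le_div_iff₀ (Real.sqrt_pos.mpr hn')]
    have h2 : (cb n * Real.sqrt n)^2 ≤ 1 := by
      rw [mul_pow, Real.sq_sqrt hn'.le]
      nlinarith [cb_sq n, cb_pos n, sq_nonneg (cb n)]
    nlinarith [mul_pos (cb_pos n) (Real.sqrt_pos.mpr hn'), sq_nonneg (cb n * Real.sqrt n - 1)]
  have h3 : (n:ℝ) ^ ((3:ℝ)/2) = n * Real.sqrt n := by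
    rw [Real.sqrt_eq_rpow, show (3:ℝ)/2 = 1 + 1/2 by norm_num, Real.rpow_add hn', Real.rpow_one]
  rw [B, h3, div_le_div_iff₀ hn' (by positivity)]
  calc cb n * (n * Real.sqrt n) = (cb n * Real.sqrt n) * n := by ring
    _ ≤ (1 / Real.sqrt n * Real.sqrt n) * n := by
        gcongr
    _ = 1 * n := by rw [div_mul_cancel₀]; exact (Real.sqrt_pos.mpr hn').ne'
  
lemma term_le_B {x : ℝ} (hx : |x| ≤ 1) (n : ℕ) : ‖cb n * x ^ n / n‖ ≤ B n := by
  rw [Real.norm_eq_abs, abs_div, abs_mul, abs_pow, abs_of_pos (cb_pos n), Nat.abs_cast]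
  refine le_trans ?_ (cb_div_le_B n)
  gcongr
  exact mul_le_of_le_one_right (cb_pos n).le (pow_le_one₀ (abs_nonneg x) hx)

lemma summable_F {x : ℝ} (hx : |x| ≤ 1) : Summable fun n => cb n * x ^ n / n :=
  Summable.of_norm_bounded (g := B) summable_B (term_le_B hx)


lemma summable_u {r : ℝ} (h0 : 0 ≤ r) (hr : r < 1) : Summable fun n : ℕ => (n:ℝ) * r ^ (n-1) := by
  rw [← summable_nat_add_iff 1]
  have h1 : Summable fun n : ℕ => (n:ℝ) * r ^ n := by
    simpa using summable_pow_mul_geometric_of_norm_lt_one 1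
      (by rwa [Real.norm_eq_abs, abs_of_nonneg h0] : ‖r‖ < 1)
  have h2 : Summable fun n : ℕ => r ^ n := summable_geometric_of_lt_one h0 hr
  have : Summable fun n : ℕ => (n:ℝ) * r ^ n + r ^ n := h1.add h2
  refine this.congr fun n => ?_
  push_cast
  ring

lemma hasDerivAt_H {x : ℝ} (hx : |x| < 1) :
    HasDerivAt (fun y => ∑' n, cb n * y ^ n) (∑' n : ℕ, (n:ℝ) * cb n * x ^ (n-1)) x := by
  set r := (1 + |x|) / 2 with hrdef
  have hr0 : 0 ≤ r := by positivity
  have hr1 : r < 1 := by rw [hrdef]; linarith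
  have hxr : |x| < r := by rw [hrdef]; linarith [abs_nonneg x]
  have hxmem : x ∈ Set.Ioo (-r) r := Set.mem_Ioo.mpr (abs_lt.mp hxr)
  have hg : ∀ n : ℕ, ∀ y ∈ Set.Ioo (-r) r,
      HasDerivAt (fun y => cb n * y ^ n) ((n:ℝ) * cb n * y ^ (n-1)) y := by
    intro n y _
    have := (hasDerivAt_pow n y).const_mul (cb n)
    refine this.congr_deriv ?_
    ring
  have hg' : ∀ n : ℕ, ∀ y ∈ Set.Ioo (-r) r, ‖(n:ℝ) * cb n * y ^ (n-1)‖ ≤ (n:ℝ) * r ^ (n-1) := by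
    intro n y hy
    have hy' : |y| ≤ r := le_of_lt (abs_lt.mpr ⟨hy.1, hy.2⟩)
    rw [Real.norm_eq_abs, abs_mul, abs_mul, abs_pow, Nat.abs_cast, abs_of_pos (cb_pos n)]
    calc (n:ℝ) * cb n * |y| ^ (n-1) ≤ (n:ℝ) * 1 * r ^ (n-1) := by
          gcongr
          exact cb_le_one n
      _ = (n:ℝ) * r ^ (n-1) := by ring
  exact hasDerivAt_tsum_of_isPreconnected (summable_u hr0 hr1) isOpen_Ioo
    (convex_Ioo (-r) r).isPreconnected hg hg' hxmem (summable_cb_pow hx) hxmem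

lemma ode {x : ℝ} (hx : |x| < 1) :
    (1 - x) * (∑' n : ℕ, (n:ℝ) * cb n * x ^ (n-1)) = (∑' n, cb n * x ^ n) / 2 := by
  set D := ∑' n : ℕ, (n:ℝ) * cb n * x ^ (n-1) with hD
  set H := ∑' n : ℕ, cb n * x ^ n with hH
  have hshift : D = ∑' n : ℕ, ((n:ℝ) + 1) * cb (n+1) * x ^ n := by
    rw [hD, Summable.tsum_eq_zero_add (summable_n_cb_pow' hx)]
    simp
  have hcoeff : ∀ n : ℕ, ((n:ℝ) + 1) * cb (n+1) * x ^ n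
      = (n:ℝ) * cb n * x ^ n + (cb n * x ^ n) / 2 := by
    intro n
    have h := cb_succ n
    have : ((n:ℝ) + 1) * cb (n+1) = (n:ℝ) * cb n + cb n / 2 := by linarith
    linear_combination (x ^ n) * this
  have hsplit : D = (∑' n : ℕ, (n:ℝ) * cb n * x ^ n) + (∑' n, (cb n * x ^ n) / 2) := by
    rw [hshift, ← Summable.tsum_add (summable_n_cb_pow hx) ((summable_cb_pow hx).div_const 2)]
    exact tsum_congr hcoeff
  have hx2 : (∑' n : ℕ, (n:ℝ) * cb n * x ^ n) = x * D := by
    rw [hD, ← tsum_mul_left]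
    refine tsum_congr fun n => ?_
    rcases Nat.eq_zero_or_pos n with rfl | hn
    · simp
    · have hp : x ^ n = x ^ (n-1) * x := by
        rw [← pow_succ, Nat.sub_add_cancel hn]
      rw [hp]; ring
  have hdiv : (∑' n, (cb n * x ^ n) / 2) = H / 2 := by
    rw [hH, ← tsum_div_const]
  have key : D = x * D + H / 2 := by rw [hx2, hdiv] at hsplit; exact hsplit
  linear_combination key

lemma hasDerivAt_sqrt_one_sub {y : ℝ} (hy : y < 1) :
    HasDerivAt (fun t => Real.sqrt (1 - t)) (-(1 / (2 * Real.sqrt (1 - y)))) y := by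
  have h1 : HasDerivAt (fun t : ℝ => 1 - t) (-1) y := by
    simpa using (hasDerivAt_id y).const_sub 1
  have h2 := (Real.hasDerivAt_sqrt (by linarith : (1:ℝ) - y ≠ 0)).comp y h1
  refine h2.congr_deriv ?_
  ring

lemma H_eq {x : ℝ} (h0 : 0 ≤ x) (h1 : x < 1) :
    ∑' n, cb n * x ^ n = 1 / Real.sqrt (1 - x) := by
  set φ : ℝ → ℝ := fun y => (∑' n, cb n * y ^ n) * Real.sqrt (1 - y) with hφ
  have hd : ∀ y, 0 ≤ y → y < 1 → HasDerivAt φ 0 y := by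
    intro y hy0 hy1
    have hay : |y| < 1 := abs_lt.mpr ⟨by linarith, hy1⟩
    have hs : (0:ℝ) < Real.sqrt (1 - y) := Real.sqrt_pos.mpr (by linarith)
    have hD := hasDerivAt_H hay
    have hsq := hasDerivAt_sqrt_one_sub hy1
    have hmul := hD.mul hsq
    refine hmul.congr_deriv ?_
    have hode := ode hay
    set s := Real.sqrt (1 - y) with hsdef
    have hs2 : s ^ 2 = 1 - y := Real.sq_sqrt (by linarith)
    set D := ∑' n : ℕ, (n:ℝ) * cb n * y ^ (n-1)
    set H := ∑' n : ℕ, cb n * y ^ n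
    have hH : H = 2 * ((1 - y) * D) := by linarith [hode]
    rw [hH, ← hs2]
    field_simp
    ring
  have hconst := constant_of_has_deriv_right_zero
    (f := φ) (a := 0) (b := x)
    (fun y hy => (hd y hy.1 (lt_of_le_of_lt hy.2 h1)).continuousAt.continuousWithinAt)
    (fun y hy => (hd y hy.1 (lt_of_lt_of_le hy.2 (le_of_lt h1))).hasDerivWithinAt)
  have hx := hconst x ⟨h0, le_rfl⟩
  have hφ0 : φ 0 = 1 := by
    rw [hφ]
    simp only
    rw [tsum_eq_single 0 (by intro n hn; simp [zero_pow hn])]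
    simp [cb_zero]
  have hs : (0:ℝ) < Real.sqrt (1 - x) := Real.sqrt_pos.mpr (by linarith)
  rw [eq_div_iff hs.ne']
  exact hx.trans hφ0

noncomputable def fderivF (n : ℕ) (y : ℝ) : ℝ := if n = 0 then 0 else cb n * y ^ (n-1)


lemma summable_fderivF {x : ℝ} (hx : |x| < 1) : Summable fun n => fderivF n x := by
  refine Summable.of_norm_bounded (g := fun n : ℕ => |x| ^ (n-1)) ?_ fun n => ?_
  · rw [← summable_nat_add_iff 1]
    simpa using summable_geometric_of_lt_one (abs_nonneg x) hx
  · rcases Nat.eq_zero_or_pos n with rfl | hn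
    · simp [fderivF]
    · rw [fderivF, if_neg hn.ne', Real.norm_eq_abs, abs_mul, abs_pow, abs_of_pos (cb_pos n)]
      exact mul_le_of_le_one_left (by positivity) (cb_le_one n)

lemma hasDerivAt_F {x : ℝ} (hx : |x| < 1) :
    HasDerivAt (fun y => ∑' n, cb n * y ^ n / n) (∑' n : ℕ, fderivF n x) x := by
  set r := (1 + |x|) / 2 with hrdef
  have hr0 : 0 ≤ r := by positivity
  have hr1 : r < 1 := by rw [hrdef]; linarith
  have hxr : |x| < r := by rw [hrdef]; linarith [abs_nonneg x]
  have hxmem : x ∈ Set.Ioo (-r) r := Set.mem_Ioo.mpr (abs_lt.mp hxr)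
  have hu : Summable fun n : ℕ => r ^ (n-1) := by
    rw [← summable_nat_add_iff 1]
    simpa using summable_geometric_of_lt_one hr0 hr1
  have hg : ∀ n : ℕ, ∀ y ∈ Set.Ioo (-r) r,
      HasDerivAt (fun y => cb n * y ^ n / n) (fderivF n y) y := by
    rintro (_ | n) y _
    · simpa [fderivF] using hasDerivAt_const y (0:ℝ)
    · have h := ((hasDerivAt_pow (n+1) y).const_mul (cb (n+1) / ((n:ℝ)+1)))
      have hne : ((n:ℝ) + 1) ≠ 0 := by positivity
      have hfun : (fun y : ℝ => cb (n+1) * y ^ (n+1) / ((n+1 : ℕ):ℝ))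
          = fun y : ℝ => (cb (n+1) / ((n:ℝ)+1)) * y ^ (n+1) := by
        funext t; push_cast; ring
      rw [hfun]
      refine h.congr_deriv ?_
      simp only [fderivF, Nat.succ_ne_zero, if_false, Nat.add_sub_cancel]
      push_cast
      field_simp
  have hg' : ∀ n : ℕ, ∀ y ∈ Set.Ioo (-r) r, ‖fderivF n y‖ ≤ r ^ (n-1) := by
    intro n y hy
    have hy' : |y| ≤ r := le_of_lt (abs_lt.mpr ⟨hy.1, hy.2⟩)
    rcases Nat.eq_zero_or_pos n with rfl | hn
    · simp [fderivF]
    · rw [fderivF, if_neg hn.ne', Real.norm_eq_abs, abs_mul, abs_pow, abs_of_pos (cb_pos n)]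
      calc cb n * |y| ^ (n-1) ≤ 1 * r ^ (n-1) := by gcongr; exact cb_le_one n
        _ = r ^ (n-1) := one_mul _
  exact hasDerivAt_tsum_of_isPreconnected hu isOpen_Ioo
    (convex_Ioo (-r) r).isPreconnected hg hg' hxmem
    (summable_F (le_of_lt (lt_of_lt_of_le hxr hr1.le))) hxmem

lemma D2_shift {x : ℝ} (hx : |x| < 1) :
    (∑' n : ℕ, fderivF n x) = ∑' n : ℕ, cb (n+1) * x ^ n := by
  rw [Summable.tsum_eq_zero_add (summable_fderivF hx)]
  simp [fderivF]

lemma summable_cb_succ_pow {x : ℝ} (hx : |x| < 1) : Summable fun n : ℕ => cb (n+1) * x ^ n := by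
  refine Summable.of_norm_bounded (g := fun n : ℕ => |x| ^ n)
    (summable_geometric_of_lt_one (abs_nonneg x) hx) fun n => ?_
  rw [Real.norm_eq_abs, abs_mul, abs_pow, abs_of_pos (cb_pos (n+1))]
  exact mul_le_of_le_one_left (by positivity) (cb_le_one (n+1))

lemma D2_eq {x : ℝ} (h0 : 0 ≤ x) (h1 : x < 1) :
    (∑' n : ℕ, fderivF n x)
      = 1 / (Real.sqrt (1-x) * (1 + Real.sqrt (1-x))) := by
  have hax : |x| < 1 := abs_lt.mpr ⟨by linarith, h1⟩
  set s := Real.sqrt (1 - x) with hsdef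
  have hs : 0 < s := Real.sqrt_pos.mpr (by linarith)
  have hs2 : s ^ 2 = 1 - x := Real.sq_sqrt (by linarith)
  rw [D2_shift hax]
  have hxD2 : x * (∑' n : ℕ, cb (n+1) * x ^ n) = (∑' n, cb n * x ^ n) - 1 := by
    rw [Summable.tsum_eq_zero_add (summable_cb_pow hax)]
    rw [← tsum_mul_left]
    have : ∀ n : ℕ, x * (cb (n+1) * x ^ n) = cb (n+1) * x ^ (n+1) := by
      intro n; rw [pow_succ]; ring
    rw [tsum_congr this]
    simp [cb_zero]
  rw [H_eq h0 h1, ← hsdef] at hxD2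
  rcases eq_or_lt_of_le h0 with rfl | hx0
  · have : (∑' n : ℕ, cb (n+1) * (0:ℝ) ^ n) = cb 1 := by
      rw [tsum_eq_single 0 (by intro n hn; simp [zero_pow hn])]
      simp
    rw [this, cb_one]
    have : s = 1 := by rw [hsdef]; simp
    rw [this]; norm_num
  · have hs1 : s < 1 := by nlinarith [hs2]
    have hxs : x = (1 - s) * (1 + s) := by linear_combination hs2
    set D2 := ∑' n : ℕ, cb (n+1) * x ^ n
    rw [eq_div_iff (by positivity)]
    have h1s : 0 < 1 - s := by linarith
    have key : s * (x * D2) = 1 - s := by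
      rw [hxD2]; field_simp
    refine mul_left_cancel₀ (ne_of_gt h1s) ?_
    linear_combination key - s * D2 * hxs
  
lemma F_eq_Ico {x : ℝ} (h0 : 0 ≤ x) (h1 : x < 1) :
    ∑' n, cb n * x ^ n / n = -2 * Real.log ((1 + Real.sqrt (1 - x)) / 2) := by
  set ψ : ℝ → ℝ := fun y => (∑' n, cb n * y ^ n / n) + 2 * Real.log ((1 + Real.sqrt (1 - y)) / 2)
    with hψ
  have hd : ∀ y, 0 ≤ y → y < 1 → HasDerivAt ψ 0 y := by
    intro y hy0 hy1
    have hay : |y| < 1 := abs_lt.mpr ⟨by linarith, hy1⟩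
    set s := Real.sqrt (1 - y) with hsdef
    have hs : 0 < s := Real.sqrt_pos.mpr (by linarith)
    have hF := hasDerivAt_F hay
    rw [D2_eq hy0 hy1] at hF
    have hu : HasDerivAt (fun t : ℝ => (1 + Real.sqrt (1 - t)) / 2) (-(1 / (2 * s)) / 2) y :=
      ((hasDerivAt_sqrt_one_sub hy1).const_add 1).div_const 2
    have hupos : (0:ℝ) < (1 + s) / 2 := by positivity
    have hlog := (Real.hasDerivAt_log hupos.ne').comp y hu
    have hlog2 := hlog.const_mul (2:ℝ)
    have hsum := hF.add hlog2
    refine hsum.congr_deriv ?_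
    rw [← hsdef]
    field_simp
    ring
  have hcont : ContinuousOn ψ (Set.Icc 0 x) :=
    fun y hy => (hd y hy.1 (lt_of_le_of_lt hy.2 h1)).continuousAt.continuousWithinAt
  have hconst := constant_of_has_deriv_right_zero hcont
    (fun y hy => (hd y hy.1 (lt_of_lt_of_le hy.2 h1.le)).hasDerivWithinAt)
  have hx := hconst x ⟨h0, le_rfl⟩
  have hψ0 : ψ 0 = 0 := by
    rw [hψ]
    simp only
    rw [tsum_eq_single 0 (by intro n hn; simp [zero_pow hn])]
    simp
  rw [hψ0] at hx
  have : ψ x = (∑' n, cb n * x ^ n / n) + 2 * Real.log ((1 + Real.sqrt (1 - x)) / 2) := rfl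
  rw [this] at hx
  linarith [hx]


lemma F_eq {x : ℝ} (h0 : 0 ≤ x) (h1 : x ≤ 1) :
    ∑' n, cb n * x ^ n / n = -2 * Real.log ((1 + Real.sqrt (1 - x)) / 2) := by
  rcases lt_or_eq_of_le h1 with h1' | rfl
  · exact F_eq_Ico h0 h1'
  -- x = 1
  have hne : (𝓝[Set.Ico (0:ℝ) 1] 1).NeBot := by
    refine mem_closure_iff_nhdsWithin_neBot.mp ?_
    rw [closure_Ico (by norm_num : (0:ℝ) ≠ 1)]
    exact ⟨by norm_num, le_rfl⟩
  have T1 : Filter.Tendsto (fun x : ℝ => ∑' n : ℕ, cb n * x ^ n / n)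
      (𝓝[Set.Ico (0:ℝ) 1] 1) (𝓝 (∑' n : ℕ, cb n * (1:ℝ) ^ n / n)) := by
    refine tendsto_tsum_of_dominated_convergence summable_B (fun k => ?_) ?_
    · have hc : Continuous fun x : ℝ => cb k * x ^ k / k := by continuity
      exact (hc.continuousAt.tendsto).mono_left nhdsWithin_le_nhds
    · filter_upwards [eventually_mem_nhdsWithin] with y hy k
      exact term_le_B (by rw [abs_of_nonneg hy.1]; exact hy.2.le) k
  have T2 : Filter.Tendsto (fun x : ℝ => ∑' n : ℕ, cb n * x ^ n / n)
      (𝓝[Set.Ico (0:ℝ) 1] 1) (𝓝 (-2 * Real.log ((1 + Real.sqrt (1 - 1)) / 2))) := by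
    have hG : Filter.Tendsto (fun x : ℝ => -2 * Real.log ((1 + Real.sqrt (1 - x)) / 2))
        (𝓝[Set.Ico (0:ℝ) 1] 1) (𝓝 (-2 * Real.log ((1 + Real.sqrt (1 - 1)) / 2))) := by
      have hcont : ContinuousAt (fun x : ℝ => -2 * Real.log ((1 + Real.sqrt (1 - x)) / 2)) 1 := by
        have h1 : ContinuousAt (fun x : ℝ => (1 + Real.sqrt (1 - x)) / 2) 1 := by fun_prop
        have h2 : ContinuousAt Real.log ((1 + Real.sqrt (1 - 1)) / 2) := by
          apply Real.continuousAt_log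
          norm_num
        exact (ContinuousAt.comp (x := (1:ℝ)) h2 h1).const_mul _
      exact hcont.tendsto.mono_left nhdsWithin_le_nhds
    refine hG.congr' ?_
    filter_upwards [eventually_mem_nhdsWithin] with y hy
    exact (F_eq_Ico hy.1 hy.2).symm
  exact tendsto_nhds_unique T1 T2


/-- Rising factorial (Pochhammer symbol) `(a)_k`. -/
noncomputable def poch (a : ℝ) (k : ℕ) : ℝ := (ascPochhammer ℝ k).eval a

lemma poch_succ (a : ℝ) (k : ℕ) : poch a (k+1) = poch a k * (a + k) := by
  unfold poch
  rw [ascPochhammer_succ_right]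
  simp

lemma poch_eq (k : ℕ) :
    poch (3/2) k * (2 * 4^k) = (Nat.centralBinom (k+1) : ℝ) * (Nat.factorial (k+1) : ℝ) := by
  induction k with
  | zero =>
    have h1 : Nat.centralBinom 1 = 2 := by decide
    simp [poch, h1, Nat.factorial]
  | succ k ih =>
    have hcb := Nat.succ_mul_centralBinom_succ (k+1)
    have hcb' : ((k:ℝ) + 2) * (Nat.centralBinom (k+2) : ℝ)
        = 2 * (2 * (k+1) + 1) * (Nat.centralBinom (k+1) : ℝ) := by
      exact_mod_cast congrArg (Nat.cast : ℕ → ℝ) hcb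
    have hfac : (Nat.factorial (k+2) : ℝ) = ((k:ℝ) + 2) * (Nat.factorial (k+1) : ℝ) := by
      rw [Nat.factorial_succ]; push_cast; ring
    rw [poch_succ, pow_succ, hfac]
    push_cast
    nlinarith [ih, hcb']

/-- `₃F₂(1,1,3/2;2,2;z) = -(4/z)·ln((1+√(1-z))/2)` for `0 < z ≤ 1`. -/
theorem threeF2_reduction (z : ℝ) (hz0 : 0 < z) (hz1 : z ≤ 1) :
    Summable (fun k : ℕ =>
      poch (3/2) k * z ^ k / ((k + 1 : ℝ) * (Nat.factorial (k + 1) : ℝ))) ∧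
    ∑' k : ℕ, poch (3/2) k * z ^ k / ((k + 1 : ℝ) * (Nat.factorial (k + 1) : ℝ)) =
      -(4 / z) * Real.log ((1 + Real.sqrt (1 - z)) / 2) := by
  have hz : |z| ≤ 1 := by rw [abs_of_pos hz0]; exact hz1
  have hterm : ∀ k : ℕ, poch (3/2) k * z ^ k / ((k + 1 : ℝ) * (Nat.factorial (k + 1) : ℝ))
      = (2 / z) * (cb (k+1) * z ^ (k+1) / ((k+1 : ℕ) : ℝ)) := by
    intro k
    have hp := poch_eq k
    have hfac : (0:ℝ) < (Nat.factorial (k+1) : ℝ) := by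
      exact_mod_cast (k+1).factorial_pos
    have h4 : (0:ℝ) < (4:ℝ)^k := by positivity
    rw [cb]
    push_cast
    rw [pow_succ (4:ℝ) k, pow_succ z k]
    field_simp
    linear_combination 2 * hp
  have hsum : Summable (fun k : ℕ => (2 / z) * (cb (k+1) * z ^ (k+1) / ((k+1 : ℕ) : ℝ))) :=
    (((summable_nat_add_iff 1).mpr (summable_F hz))).mul_left (2 / z)
  constructor
  · exact hsum.congr fun k => (hterm k).symm
  · rw [tsum_congr hterm, tsum_mul_left]
    have hshift : ∑' k : ℕ, cb (k+1) * z ^ (k+1) / ((k+1 : ℕ) : ℝ)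
        = ∑' n : ℕ, cb n * z ^ n / n := by
      rw [Summable.tsum_eq_zero_add (summable_F hz)]
      simp
    rw [hshift, F_eq hz0.le hz1]
    ring
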